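/- Let k ≥ 0. Then: (i) for every y ∈ ℝⁿ and every t > 0, C_k(y) ≤ kt + t L(y/t), and equality holds whenever y ∈ t Γ_k; (ii) for every open set U ⊆ ℝⁿ and every x ∈ U, for all sufficiently small t > 0 one has T^t C_k(x) = C_k(x) + kt, where T^t is computed relative to U applied to the restriction of the function z ↦ C_k(z) to U. -/

import Mathlib

open Set Metric MeasureTheory Filter Bornology
open scoped RealInnerProductSpace Pointwise

noncomputable section

abbrev Euc (n : ℕ) := EuclideanSpace ℝ (Fin n)

variable {n : ℕ}

/-- The Lagrangian of `H`, an extended real number. -/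
def Lag (H : Euc n → ℝ) (q : Euc n) : EReal :=
  ⨆ p : Euc n, ((⟪p, q⟫ - H p : ℝ) : EReal)

/-- `T^t u (x)`, with supremum taken over `y ∈ S`. Points `y` where the Lagrangian term
is `+∞` contribute nothing, since no real number equals `-∞`. -/
def TupOn (H : Euc n → ℝ) (S : Set (Euc n)) (u : Euc n → ℝ) (t : ℝ) (x : Euc n) : ℝ :=
  if t = 0 then u x
  else sSup {r : ℝ | ∃ y ∈ S, (r : EReal) = (u y : EReal) - (t : EReal) * Lag H (t⁻¹ • (y - x))}

/-- `T_t u (x)`, with infimum taken over `y ∈ S`. -/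
def TdnOn (H : Euc n → ℝ) (S : Set (Euc n)) (u : Euc n → ℝ) (t : ℝ) (x : Euc n) : ℝ :=
  if t = 0 then u x
  else sInf {r : ℝ | ∃ y ∈ S, (r : EReal) = (u y : EReal) + (t : EReal) * Lag H (t⁻¹ • (x - y))}

/-- `S⁺ u (x) = limsup_{t ↓ 0} (T^t u(x) - u(x))/t`. -/
def Splus (H : Euc n → ℝ) (U : Set (Euc n)) (u : Euc n → ℝ) (x : Euc n) : ℝ :=
  limsup (fun t => (TupOn H U u t x - u x) / t) (nhdsWithin 0 (Ioi 0))

/-- The oscillation `osc_U u = sup_U u - inf_U u`. -/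
def oscOn (u : Euc n → ℝ) (U : Set (Euc n)) : ℝ := sSup (u '' U) - sInf (u '' U)

/-- `U_r = {x ∈ U : dist(x, ∂U) > r}`. -/
def inUr (U : Set (Euc n)) (r : ℝ) : Set (Euc n) := {x ∈ U | r < infDist x (frontier U)}

/-- The cone function `C_k(x) = max {p·x : H(p) = k}`. -/
def coneFn (H : Euc n → ℝ) (k : ℝ) (x : Euc n) : ℝ :=
  sSup {r : ℝ | ∃ p, H p = k ∧ r = ⟪p, x⟫}

/-- The subdifferential of `H` at `p`. -/
def subdiff (H : Euc n → ℝ) (p : Euc n) : Set (Euc n) :=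
  {q | ∀ p', H p + ⟪q, p' - p⟫ ≤ H p'}

/-- `Γ_k`: subgradients of `H` at points of the level set `H⁻¹(k)`. -/
def GammaSet (H : Euc n → ℝ) (k : ℝ) : Set (Euc n) :=
  {q | ∃ p, H p = k ∧ q ∈ subdiff H p}

/-- `W_k`: subgradients of `H` at points of the sublevel set `H⁻¹([0,k])`. -/
def WSet (H : Euc n → ℝ) (k : ℝ) : Set (Euc n) :=
  {q | ∃ p, 0 ≤ H p ∧ H p ≤ k ∧ q ∈ subdiff H p}

/-- `u ∈ Lip_loc(U)`: `u` is locally Lipschitz on `U`. -/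
def LocLipOn (u : Euc n → ℝ) (U : Set (Euc n)) : Prop :=
  ∀ x ∈ U, ∃ K : NNReal, ∃ s ∈ nhdsWithin x U, LipschitzOnWith K u s

/-- `ess sup_V H(Dv)`, defined to be `+∞` if `v` is not locally Lipschitz in `V`.
Here `Dv` is the a.e.-defined gradient (Rademacher). -/
def essSupH (H : Euc n → ℝ) (V : Set (Euc n)) (v : Euc n → ℝ) : EReal :=
  haveI := Classical.propDecidable (LocLipOn v V)
  if LocLipOn v V then
    essSup (fun x => ((H (gradient v x) : ℝ) : EReal)) (volume.restrict V)
  else ⊤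

/-- `u` is absolutely subminimizing for `H` in `U`. -/
def AbsSubmin (H : Euc n → ℝ) (U : Set (Euc n)) (u : Euc n → ℝ) : Prop :=
  LocLipOn u U ∧
  ∀ V : Set (Euc n), IsOpen V → IsCompact (closure V) → closure V ⊆ U →
    ∀ v : Euc n → ℝ, LocLipOn v V → ContinuousOn v (closure V) →
      EqOn v u (frontier V) → (∀ x ∈ V, v x ≤ u x) →
        essSupH H V u ≤ essSupH H V v

/-- `u` is absolutely superminimizing for `H` in `U`. -/
def AbsSupermin (H : Euc n → ℝ) (U : Set (Euc n)) (u : Euc n → ℝ) : Prop :=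
  LocLipOn u U ∧
  ∀ V : Set (Euc n), IsOpen V → IsCompact (closure V) → closure V ⊆ U →
    ∀ v : Euc n → ℝ, LocLipOn v V → ContinuousOn v (closure V) →
      EqOn v u (frontier V) → (∀ x ∈ V, u x ≤ v x) →
        essSupH H V u ≤ essSupH H V v

/-- `u` satisfies comparisons with cones from above in `U`. -/
def CmpConesAbove (H : Euc n → ℝ) (U : Set (Euc n)) (u : Euc n → ℝ) : Prop :=
  ∀ k : ℝ, 0 ≤ k → ∀ V : Set (Euc n), IsOpen V → IsCompact (closure V) → closure V ⊆ U →
    ∀ x₀, x₀ ∉ V →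
      sSup ((fun x => u x - coneFn H k (x - x₀)) '' closure V) =
      sSup ((fun x => u x - coneFn H k (x - x₀)) '' frontier V)

/-- `u` satisfies the convexity criterion in `U`. -/
def ConvexityCriterion (H : Euc n → ℝ) (U : Set (Euc n)) (u : Euc n → ℝ) : Prop :=
  ∀ V : Set (Euc n), IsOpen V → IsCompact (closure V) → closure V ⊆ U →
    ∃ δ > (0:ℝ), ∀ x ∈ V, ConvexOn ℝ (Icc 0 δ) (fun t => TupOn H U u t x)

/-- `u` satisfies the pointwise convexity criterion in `U`. -/
def PtwiseCC (H : Euc n → ℝ) (U : Set (Euc n)) (u : Euc n → ℝ) : Prop :=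
  UpperSemicontinuousOn (Splus H U u) U ∧
  ∀ x ∈ U, ∃ δ > (0:ℝ), ConvexOn ℝ (Icc 0 δ) (fun t => TupOn H U u t x)

end

section ConeFlowAux

variable {n : ℕ}

private lemma lag_ge (H : Euc n → ℝ) (q p : Euc n) :
    ((⟪p, q⟫ - H p : ℝ) : EReal) ≤ Lag H q :=
  le_iSup (fun p : Euc n => ((⟪p, q⟫ - H p : ℝ) : EReal)) p

private lemma lag_nonneg (H : Euc n → ℝ) (hH0 : H 0 = 0) (q : Euc n) :
    (0 : EReal) ≤ Lag H q := by
  have h := lag_ge H q 0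
  simpa [hH0] using h

private lemma lag_subdiff (H : Euc n → ℝ) {p₀ q : Euc n} (hq : q ∈ subdiff H p₀) :
    Lag H q = ((⟪p₀, q⟫ - H p₀ : ℝ) : EReal) := by
  refine le_antisymm (iSup_le fun p => ?_) (lag_ge H q p₀)
  rw [EReal.coe_le_coe_iff]
  have h := hq p
  have h2 : ⟪q, p - p₀⟫ = ⟪p, q⟫ - ⟪p₀, q⟫ := by
    rw [inner_sub_right, real_inner_comm q p, real_inner_comm q p₀]
  linarith

private lemma coercive (hn : 1 ≤ n) (H : Euc n → ℝ)
    (hHconv : ConvexOn ℝ Set.univ H) (hH0 : H 0 = 0) (hHnonneg : ∀ p, 0 ≤ H p)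
    (hHzb : Bornology.IsBounded {p : Euc n | H p = 0}) (hHcont : Continuous H) :
    ∀ c : ℝ, ∃ R > 0, ∀ p : Euc n, H p ≤ c → ‖p‖ ≤ R := by
  obtain ⟨r, hr⟩ := hHzb.subset_closedBall 0
  set R₀ : ℝ := max r 0 + 1 with hR₀def
  have hR₀ : 0 < R₀ := by positivity
  have hzero : ∀ p : Euc n, ‖p‖ = R₀ → 0 < H p := by
    intro p hp
    rcases (hHnonneg p).lt_or_eq with h | h
    · exact h
    · exfalso
      have hmem : p ∈ closedBall (0 : Euc n) r := hr (by simpa using h.symm)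
      rw [mem_closedBall, dist_zero_right] at hmem
      have h1 : ‖p‖ ≤ max r 0 := le_trans hmem (le_max_left _ _)
      rw [hp] at h1
      linarith
  haveI : Nontrivial (Euc n) := by
    refine ⟨EuclideanSpace.single (⟨0, hn⟩ : Fin n) (1 : ℝ), 0, ?_⟩
    intro hcon
    have h1 : ‖EuclideanSpace.single (⟨0, hn⟩ : Fin n) (1 : ℝ)‖ = 1 := by
      rw [EuclideanSpace.norm_single]; simp
    rw [hcon] at h1; simp at h1
  have hsph : (sphere (0 : Euc n) R₀).Nonempty := NormedSpace.sphere_nonempty.2 hR₀.le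
  obtain ⟨pm, hpm, hpmin⟩ :=
    (isCompact_sphere (0 : Euc n) R₀).exists_isMinOn hsph hHcont.continuousOn
  rw [mem_sphere_zero_iff_norm] at hpm
  have hmpos : 0 < H pm := hzero pm hpm
  have hlow : ∀ p : Euc n, R₀ ≤ ‖p‖ → H pm * ‖p‖ / R₀ ≤ H p := by
    intro p hp
    have hpn : 0 < ‖p‖ := lt_of_lt_of_le hR₀ hp
    set a : ℝ := R₀ / ‖p‖ with ha
    have ha0 : 0 < a := div_pos hR₀ hpn
    have ha1 : a ≤ 1 := (div_le_one hpn).2 hp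
    have hcomb := hHconv.2 (Set.mem_univ p) (Set.mem_univ (0 : Euc n)) ha0.le
      (by linarith : (0:ℝ) ≤ 1 - a) (by ring)
    simp only [smul_zero, add_zero, smul_eq_mul, hH0, mul_zero] at hcomb
    have hnorm : ‖a • p‖ = R₀ := by
      rw [norm_smul, Real.norm_of_nonneg ha0.le, ha]
      field_simp
    have hmle : H pm ≤ H (a • p) := hpmin (by rwa [mem_sphere_zero_iff_norm])
    have hle2 : H pm ≤ a * H p := le_trans hmle hcomb
    rw [div_le_iff₀ hR₀]
    rw [ha] at hle2
    have h3 : (R₀ / ‖p‖) * H p * ‖p‖ = H p * R₀ := by field_simp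
    nlinarith [hHnonneg p]
  intro c
  refine ⟨max R₀ (R₀ * c / H pm) + 1, by positivity, ?_⟩
  intro p hpc
  by_contra hcon
  push_neg at hcon
  have hge : R₀ ≤ ‖p‖ := by
    have := le_max_left R₀ (R₀ * c / H pm)
    linarith
  have h1 : H pm * ‖p‖ / R₀ ≤ c := le_trans (hlow p hge) hpc
  rw [div_le_iff₀ hR₀] at h1
  have h3 : ‖p‖ ≤ R₀ * c / H pm := by
    rw [le_div_iff₀ hmpos]; nlinarith
  have h4 := le_max_right R₀ (R₀ * c / H pm)
  linarith

private lemma level_nonempty (hn : 1 ≤ n) (H : Euc n → ℝ)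
    (hHconv : ConvexOn ℝ Set.univ H) (hH0 : H 0 = 0) (hHnonneg : ∀ p, 0 ≤ H p)
    (hHzb : Bornology.IsBounded {p : Euc n | H p = 0}) (hHcont : Continuous H)
    {k : ℝ} (hk : 0 ≤ k) : ∃ p : Euc n, H p = k := by
  rcases hk.eq_or_lt with h | h
  · exact ⟨0, by rw [hH0, h]⟩
  obtain ⟨R, hR, hcoer⟩ := coercive hn H hHconv hH0 hHnonneg hHzb hHcont k
  set p₁ : Euc n := EuclideanSpace.single (⟨0, hn⟩ : Fin n) (R + 1) with hp₁def
  have hp₁ : ‖p₁‖ = R + 1 := by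
    rw [hp₁def, EuclideanSpace.norm_single, Real.norm_of_nonneg (by linarith)]
  have hHp₁ : k < H p₁ := by
    by_contra hle
    push_neg at hle
    have := hcoer p₁ hle
    rw [hp₁] at this; linarith
  have hseg : ContinuousOn (fun s : ℝ => H (s • p₁)) (Icc 0 1) :=
    (hHcont.comp (continuous_id.smul continuous_const)).continuousOn
  have hkmem : k ∈ Icc ((fun s : ℝ => H (s • p₁)) 0) ((fun s : ℝ => H (s • p₁)) 1) := by
    simp only [zero_smul, one_smul, hH0]
    exact ⟨hk, hHp₁.le⟩
  obtain ⟨s, _, hs⟩ := intermediate_value_Icc zero_le_one hseg hkmem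
  exact ⟨s • p₁, hs⟩

private lemma subdiff_nonempty (H : Euc n → ℝ) (hHconv : ConvexOn ℝ Set.univ H)
    (hHcont : Continuous H) (p₀ : Euc n) : ∃ q, q ∈ subdiff H p₀ := by
  set s : Set (Euc n × ℝ) := {z | H z.1 < z.2} with hs
  have hopen : IsOpen s := isOpen_lt (hHcont.comp continuous_fst) continuous_snd
  have hconv : Convex ℝ s := by
    rintro ⟨z1, s1⟩ h1 ⟨z2, s2⟩ h2 a b ha hb hab
    simp only [hs, Set.mem_setOf_eq] at h1 h2 ⊢
    simp only [Prod.fst_add, Prod.snd_add, Prod.smul_fst, Prod.smul_snd, smul_eq_mul]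
    have hH := hHconv.2 (Set.mem_univ z1) (Set.mem_univ z2) ha hb hab
    simp only [smul_eq_mul] at hH
    have h1' : a * H z1 ≤ a * s1 := mul_le_mul_of_nonneg_left h1.le ha
    have h2' : b * H z2 ≤ b * s2 := mul_le_mul_of_nonneg_left h2.le hb
    rcases ha.lt_or_eq with ha' | ha'
    · have := mul_lt_mul_of_pos_left h1 ha'
      calc H (a • z1 + b • z2) ≤ a * H z1 + b * H z2 := hH
        _ < a * s1 + b * s2 := by linarith
    · have hb' : 0 < b := by linarith
      have := mul_lt_mul_of_pos_left h2 hb'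
      calc H (a • z1 + b • z2) ≤ a * H z1 + b * H z2 := hH
        _ < a * s1 + b * s2 := by linarith
  have hnot : ((p₀, H p₀) : Euc n × ℝ) ∉ s := by simp [hs]
  obtain ⟨f, hf⟩ := geometric_hahn_banach_open_point hconv hopen hnot
  set α : ℝ := f (0, 1) with hα
  have hf_eq : ∀ (p : Euc n) (c : ℝ), f (p, c) = f (p, 0) + c * α := by
    intro p c
    have heq : ((p, c) : Euc n × ℝ) = (p, 0) + c • ((0 : Euc n), (1 : ℝ)) := by
      simp [Prod.ext_iff]
    rw [heq, map_add, f.map_smul, smul_eq_mul, hα]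
  have hαneg : α < 0 := by
    have h := hf (p₀, H p₀ + 1) (by simp [hs])
    rw [hf_eq p₀ (H p₀ + 1), hf_eq p₀ (H p₀)] at h
    linarith
  have hα0 : α ≠ 0 := ne_of_lt hαneg
  have hkey : ∀ p : Euc n, f (p, 0) + H p * α ≤ f (p₀, 0) + H p₀ * α := by
    intro p
    by_contra hcon
    push_neg at hcon
    set A := f (p, 0) + H p * α with hA
    set B := f (p₀, 0) + H p₀ * α with hB
    set ε := (A - B) / (-2 * α) with hε
    have hεpos : 0 < ε := div_pos (by linarith) (by linarith)
    have h := hf (p, H p + ε) (by simp only [hs, Set.mem_setOf_eq]; linarith)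
    rw [hf_eq p (H p + ε), hf_eq p₀ (H p₀)] at h
    have hεα : ε * α = (B - A) / 2 := by
      rw [hε]; field_simp; ring
    rw [add_mul] at h
    have hAB : A + ε * α < B := by rw [hA, hB]; linarith
    rw [hεα] at hAB
    linarith
  set g : Euc n →L[ℝ] ℝ := f.comp (ContinuousLinearMap.inl ℝ (Euc n) ℝ) with hg
  set v : Euc n := (InnerProductSpace.toDual ℝ (Euc n)).symm g with hv
  have hvp : ∀ p : Euc n, ⟪v, p⟫ = f (p, 0) := by
    intro p
    rw [hv, InnerProductSpace.toDual_symm_apply, hg]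
    simp
  refine ⟨(-α)⁻¹ • v, fun p' => ?_⟩
  have h := hkey p'
  rw [← hvp p', ← hvp p₀] at h
  rw [real_inner_smul_left, inner_sub_right]
  have hnα : (0:ℝ) < -α := by linarith
  have h2 : (-α)⁻¹ * (⟪v, p'⟫ - ⟪v, p₀⟫) ≤ (-α)⁻¹ * ((H p₀ - H p') * α) := by
    apply mul_le_mul_of_nonneg_left _ (inv_nonneg.2 hnα.le)
    nlinarith [h]
  have h3 : (-α)⁻¹ * ((H p₀ - H p') * α) = H p' - H p₀ := by
    field_simp
    ring
  linarith

end ConeFlowAux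

/-- The Hopf–Lax flow of cone functions. -/
theorem cone_flow {n : ℕ} (hn : 1 ≤ n) (H : Euc n → ℝ)
    (hHconv : ConvexOn ℝ Set.univ H) (hH0 : H 0 = 0) (hHnonneg : ∀ p, 0 ≤ H p)
    (hHzb : Bornology.IsBounded {p : Euc n | H p = 0})
    (hHzi : interior {p : Euc n | H p = 0} = ∅)
    (k : ℝ) (hk : 0 ≤ k) :
    (∀ (y : Euc n) (t : ℝ), 0 < t →
      ((coneFn H k y : ℝ) : EReal) ≤ ((k * t : ℝ) : EReal) + (t : EReal) * Lag H (t⁻¹ • y) ∧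
      (y ∈ t • GammaSet H k →
        ((coneFn H k y : ℝ) : EReal) =
          ((k * t : ℝ) : EReal) + (t : EReal) * Lag H (t⁻¹ • y))) ∧
    (∀ U : Set (Euc n), IsOpen U → ∀ x ∈ U, ∃ t₁ > (0:ℝ), ∀ t : ℝ, 0 < t → t < t₁ →
      TupOn H U (coneFn H k) t x = coneFn H k x + k * t) := by
  have hHcont : Continuous H := by
    rw [← continuousOn_univ]
    exact ConvexOn.continuousOn isOpen_univ hHconv
  obtain ⟨R, hRpos, hcoer⟩ := coercive hn H hHconv hH0 hHnonneg hHzb hHcont k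
  obtain ⟨pe, hpe⟩ := level_nonempty hn H hHconv hH0 hHnonneg hHzb hHcont hk
  have hlevR : ∀ p : Euc n, H p = k → ‖p‖ ≤ R := fun p hp => hcoer p hp.le
  have hbdd : ∀ z : Euc n, BddAbove {r : ℝ | ∃ p, H p = k ∧ r = ⟪p, z⟫} := by
    intro z
    refine ⟨R * ‖z‖, ?_⟩
    rintro r ⟨p, hp, rfl⟩
    calc ⟪p, z⟫ ≤ ‖p‖ * ‖z‖ := real_inner_le_norm p z
      _ ≤ R * ‖z‖ := mul_le_mul_of_nonneg_right (hlevR p hp) (norm_nonneg z)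
  have hle : ∀ (p z : Euc n), H p = k → ⟪p, z⟫ ≤ coneFn H k z :=
    fun p z hp => le_csSup (hbdd z) ⟨p, hp, rfl⟩
  have hsup_le : ∀ (z : Euc n) (b : ℝ), (∀ p, H p = k → ⟪p, z⟫ ≤ b) → coneFn H k z ≤ b := by
    intro z b hb
    have hne : Set.Nonempty {r : ℝ | ∃ p, H p = k ∧ r = ⟪p, z⟫} := ⟨⟪pe, z⟫, pe, hpe, rfl⟩
    apply csSup_le hne
    rintro r ⟨p, hp, rfl⟩
    exact hb p hp
  have part1 : ∀ (y : Euc n) (t : ℝ), 0 < t →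
      ((coneFn H k y : ℝ) : EReal) ≤ ((k * t : ℝ) : EReal) + (t : EReal) * Lag H (t⁻¹ • y) ∧
      (y ∈ t • GammaSet H k →
        ((coneFn H k y : ℝ) : EReal) =
          ((k * t : ℝ) : EReal) + (t : EReal) * Lag H (t⁻¹ • y)) := by
    intro y t ht
    constructor
    · by_cases hΛ : Lag H (t⁻¹ • y) = ⊤
      · rw [hΛ, EReal.coe_mul_top_of_pos ht, EReal.add_top_of_ne_bot (EReal.coe_ne_bot _)]
        exact le_top
      · have hΛb : Lag H (t⁻¹ • y) ≠ ⊥ := by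
          intro hbot
          have := lag_nonneg H hH0 (t⁻¹ • y)
          rw [hbot] at this
          simp at this
        have hLcoe : ((Lag H (t⁻¹ • y)).toReal : EReal) = Lag H (t⁻¹ • y) :=
          EReal.coe_toReal hΛ hΛb
        set L : ℝ := (Lag H (t⁻¹ • y)).toReal with hLdef
        have hterm : ∀ p : Euc n, H p = k → ⟪p, y⟫ ≤ k * t + t * L := by
          intro p hp
          have h1 : ((⟪p, t⁻¹ • y⟫ - H p : ℝ) : EReal) ≤ (L : EReal) := by
            rw [hLcoe]; exact lag_ge H _ p
          rw [EReal.coe_le_coe_iff, real_inner_smul_right, hp] at h1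
          have h2 : ⟪p, y⟫ = t * (t⁻¹ * ⟪p, y⟫) := by field_simp
          rw [h2]
          nlinarith [mul_le_mul_of_nonneg_left (by linarith : t⁻¹ * ⟪p, y⟫ ≤ L + k) ht.le]
        have hmain := hsup_le y _ hterm
        calc ((coneFn H k y : ℝ) : EReal) ≤ ((k * t + t * L : ℝ) : EReal) :=
              EReal.coe_le_coe_iff.2 hmain
          _ = ((k * t : ℝ) : EReal) + (t : EReal) * Lag H (t⁻¹ • y) := by
              rw [← hLcoe]; norm_cast
    · rintro hy
      obtain ⟨q, hqΓ, rfl⟩ := hy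
      obtain ⟨p₀, hp₀k, hp₀s⟩ := hqΓ
      have hqy : t⁻¹ • (t • q) = q := inv_smul_smul₀ ht.ne' q
      rw [hqy, lag_subdiff H hp₀s, hp₀k]
      have hcone : coneFn H k (t • q) = t * ⟪p₀, q⟫ := by
        apply le_antisymm
        · apply hsup_le
          intro p hp
          have h := hp₀s p
          have h2 : ⟪q, p - p₀⟫ = ⟪p, q⟫ - ⟪p₀, q⟫ := by
            rw [inner_sub_right, real_inner_comm q p, real_inner_comm q p₀]
          have h3 : ⟪p, q⟫ ≤ ⟪p₀, q⟫ := by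
            rw [hp, hp₀k, h2] at h; linarith
          rw [real_inner_smul_right]
          nlinarith [mul_le_mul_of_nonneg_left h3 ht.le]
        · have h := hle p₀ (t • q) hp₀k
          rwa [real_inner_smul_right] at h
      rw [hcone, ← EReal.coe_mul, ← EReal.coe_add, EReal.coe_eq_coe_iff]
      ring
  refine ⟨part1, ?_⟩
  intro U hU x hx
  have hcls : IsClosed {p : Euc n | H p = k} := isClosed_eq hHcont continuous_const
  have hbddlev : Bornology.IsBounded {p : Euc n | H p = k} := by
    apply (isBounded_closedBall (x := (0 : Euc n)) (r := R)).subset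
    intro p hp
    rw [mem_closedBall, dist_zero_right]
    exact hlevR p hp
  have hcpt := Metric.isCompact_of_isClosed_isBounded hcls hbddlev
  obtain ⟨p₀, hp₀k, hp₀max⟩ := hcpt.exists_isMaxOn ⟨pe, hpe⟩
    ((Continuous.inner continuous_id continuous_const).continuousOn :
      ContinuousOn (fun p : Euc n => ⟪p, x⟫) _)
  obtain ⟨q, hq⟩ := subdiff_nonempty H hHconv hHcont p₀
  have hconex : coneFn H k x = ⟪p₀, x⟫ :=
    le_antisymm (hsup_le x _ fun p hp => hp₀max hp) (hle p₀ x hp₀k)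
  obtain ⟨ε, hε, hball⟩ := Metric.isOpen_iff.1 hU x hx
  refine ⟨ε / (‖q‖ + 1), by positivity, ?_⟩
  intro t ht htt
  rw [TupOn, if_neg ht.ne']
  have hub : ∀ r ∈ {r : ℝ | ∃ y ∈ U, (r : EReal) =
      ((coneFn H k y : ℝ) : EReal) - (t : EReal) * Lag H (t⁻¹ • (y - x))},
      r ≤ coneFn H k x + k * t := by
    rintro r ⟨y, hyU, hr⟩
    by_cases hΛ : Lag H (t⁻¹ • (y - x)) = ⊤
    · exfalso
      rw [hΛ, EReal.coe_mul_top_of_pos ht, EReal.sub_top] at hr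
      exact EReal.coe_ne_bot r hr
    · have hΛb : Lag H (t⁻¹ • (y - x)) ≠ ⊥ := by
        intro hbot
        have := lag_nonneg H hH0 (t⁻¹ • (y - x))
        rw [hbot] at this
        simp at this
      have hLcoe : ((Lag H (t⁻¹ • (y - x))).toReal : EReal) = Lag H (t⁻¹ • (y - x)) :=
        EReal.coe_toReal hΛ hΛb
      set L : ℝ := (Lag H (t⁻¹ • (y - x))).toReal with hLdef
      rw [← hLcoe, ← EReal.coe_mul, ← EReal.coe_sub, EReal.coe_eq_coe_iff] at hr
      have hineq := (part1 (y - x) t ht).1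
      rw [← hLcoe, ← EReal.coe_mul, ← EReal.coe_add, EReal.coe_le_coe_iff] at hineq
      have hsub : coneFn H k y ≤ coneFn H k x + coneFn H k (y - x) := by
        apply hsup_le
        intro p hp
        have h4 : ⟪p, y⟫ = ⟪p, x⟫ + ⟪p, y - x⟫ := by
          rw [inner_sub_right]; ring
        rw [h4]
        exact add_le_add (hle p x hp) (hle p _ hp)
      rw [hr]
      linarith
  have hyU : x + t • q ∈ U := by
    apply hball
    rw [mem_ball, dist_self_add_left, norm_smul, Real.norm_of_nonneg ht.le]
    have h5 : t * (‖q‖ + 1) < ε := (lt_div_iff₀ (by positivity)).1 htt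
    nlinarith [norm_nonneg q, ht]
  have hqy : t⁻¹ • (x + t • q - x) = q := by
    rw [add_sub_cancel_left]
    exact inv_smul_smul₀ ht.ne' q
  have hΛq : Lag H (t⁻¹ • (x + t • q - x)) = ((⟪p₀, q⟫ - k : ℝ) : EReal) := by
    rw [hqy, lag_subdiff H hq, hp₀k]
  have hr₀A : (coneFn H k (x + t • q) - t * (⟪p₀, q⟫ - k)) ∈ {r : ℝ | ∃ y ∈ U, (r : EReal) =
      ((coneFn H k y : ℝ) : EReal) - (t : EReal) * Lag H (t⁻¹ • (y - x))} :=
    ⟨x + t • q, hyU, by rw [hΛq, ← EReal.coe_mul, ← EReal.coe_sub]⟩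
  have hr₀ge : coneFn H k x + k * t ≤ coneFn H k (x + t • q) - t * (⟪p₀, q⟫ - k) := by
    have h1 : ⟪p₀, x + t • q⟫ ≤ coneFn H k (x + t • q) := hle p₀ _ hp₀k
    rw [inner_add_right, real_inner_smul_right] at h1
    rw [hconex]
    linarith
  exact le_antisymm (csSup_le ⟨_, hr₀A⟩ hub)
    (le_trans hr₀ge (le_csSup ⟨_, hub⟩ hr₀A))
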